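/- Let ω be a compactly supported finite nonnegative Borel measure on ℝ², and let G(r) = ω(closedBall(0,r)) for r > 0, G(r) = 0 otherwise, be its radial cumulative distribution function. Then H⁺(ω) ≤ H⁺(dG), i.e. ∫_{ℝ²}∫_{ℝ²} log⁺(1/|x−y|) dω(x) dω(y) ≤ ∫_ℝ∫_ℝ log⁺(1/|r−s|) dG(r) dG(s). -/

import Mathlib

open MeasureTheory Set Metric
open scoped ENNReal Classical

/-- The plane `ℝ²` with the Euclidean norm. -/
abbrev Plane := EuclideanSpace ℝ (Fin 2)

/-- `log⁺ t = max (log t) 0`. -/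
noncomputable def logPlus (t : ℝ) : ℝ := max (Real.log t) 0

/-- The kernel `log⁺ (1/|x-y|)` on `ℝ²`, valued in `ℝ≥0∞` (it is `∞` on the diagonal). -/
noncomputable def logKernel2 (x y : Plane) : ℝ≥0∞ :=
  if x = y then ⊤ else ENNReal.ofReal (logPlus (1 / dist x y))

/-- Positive logarithmic energy of a nonnegative measure `ω` on `ℝ²`. -/
noncomputable def Hplus2 (ω : Measure Plane) : ℝ≥0∞ :=
  ∫⁻ x, ∫⁻ y, logKernel2 x y ∂ω ∂ω

/-- The kernel `log⁺ (1/|r-s|)` on `ℝ`, valued in `ℝ≥0∞` (it is `∞` on the diagonal). -/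
noncomputable def logKernel1 (x y : ℝ) : ℝ≥0∞ :=
  if x = y then ⊤ else ENNReal.ofReal (logPlus (1 / |x - y|))

/-- Positive logarithmic energy of a nonnegative measure `μ` on `ℝ`. -/
noncomputable def HplusM (μ : Measure ℝ) : ℝ≥0∞ :=
  ∫⁻ x, ∫⁻ y, logKernel1 x y ∂μ ∂μ

/-- The radial cumulative distribution function of a measure `ω` on `ℝ²`. -/
noncomputable def radialCDF (ω : Measure Plane) (r : ℝ) : ℝ :=
  if 0 < r then (ω (Metric.closedBall 0 r)).toReal else 0

lemma kernel_le (x y : Plane) : logKernel2 x y ≤ logKernel1 ‖x‖ ‖y‖ := by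
  by_cases h : ‖x‖ = ‖y‖
  · simp [logKernel1, h]
  · have hxy : x ≠ y := fun e => h (by rw [e])
    rw [logKernel2, if_neg hxy, logKernel1, if_neg h]
    apply ENNReal.ofReal_le_ofReal
    have h1 : (0:ℝ) < |‖x‖ - ‖y‖| := abs_pos.2 (sub_ne_zero.2 h)
    have h2 : |‖x‖ - ‖y‖| ≤ dist x y := by
      rw [dist_eq_norm]; exact abs_norm_sub_norm_le x y
    have h4 : (0:ℝ) < 1 / dist x y := by
      have := dist_pos.2 hxy; positivity
    have h3 : 1 / dist x y ≤ 1 / |‖x‖ - ‖y‖| := one_div_le_one_div_of_le h1 h2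
    exact max_le_max (Real.log_le_log h4 h3) le_rfl

lemma mK1 : Measurable (fun p : ℝ × ℝ => logKernel1 p.1 p.2) := by
  unfold logKernel1 logPlus
  apply Measurable.ite (measurableSet_eq_fun measurable_fst measurable_snd) measurable_const
  exact ENNReal.measurable_ofReal.comp ((Real.measurable_log.comp
    (measurable_const.div ((measurable_fst.sub measurable_snd).abs))).max measurable_const)

/-- If `ω` is a compactly supported finite nonnegative Borel measure on `ℝ²` with radial
cumulative distribution function `G`, and `dG` is the Lebesgue–Stieltjes measure generated
by `G` (characterized via right limits of `G` by `dG((a,b]) = G(b⁺) - G(a⁺)`), then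
`H⁺(ω) ≤ H⁺(dG)`. -/
theorem hplus2_le_hplusM_radialCDF (ω : Measure Plane) [IsFiniteMeasure ω]
    (hsupp : ∃ s : Set Plane, IsCompact s ∧ ω sᶜ = 0)
    (μ : Measure ℝ)
    (hμ : ∀ a b : ℝ, a ≤ b → μ (Set.Ioc a b) =
      ENNReal.ofReal (Function.rightLim (radialCDF ω) b - Function.rightLim (radialCDF ω) a)) :
    Hplus2 ω ≤ HplusM μ := by
  classical
  set ν : Measure ℝ := ω.map (fun x : Plane => ‖x‖) with hνdef
  have hmapply : ∀ s : Set ℝ, MeasurableSet s → ν s = ω ((fun x : Plane => ‖x‖) ⁻¹' s) :=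
    fun s hs => Measure.map_apply measurable_norm hs
  have hνfin : IsFiniteMeasure ν := by
    constructor
    rw [hmapply univ MeasurableSet.univ]
    exact measure_lt_top ω _
  set F : ℝ → ℝ := fun r => (ν (Iic r)).toReal with hFdef
  have hFmono : Monotone F := fun a b hab =>
    ENNReal.toReal_mono (measure_ne_top ν _) (measure_mono (Iic_subset_Iic.2 hab))
  -- G agrees with F away from 0
  have hGF : ∀ r : ℝ, r ≠ 0 → radialCDF ω r = F r := by
    intro r hr
    rcases lt_or_gt_of_ne hr with hneg | hpos
    · rw [radialCDF, if_neg (by linarith)]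
      have : ν (Iic r) = 0 := by
        rw [hmapply _ measurableSet_Iic]
        convert measure_empty (μ := ω)
        ext x
        simp only [mem_preimage, mem_Iic, mem_empty_iff_false, iff_false, not_le]
        exact lt_of_lt_of_le hneg (norm_nonneg x)
      simp [F, this]
    · rw [radialCDF, if_pos hpos]
      congr 1
      rw [hmapply _ measurableSet_Iic]
      congr 1
      ext x
      simp [mem_closedBall, dist_zero_right]
  -- right limit of G
  have hR : ∀ b : ℝ, Function.rightLim (radialCDF ω) b = F b := by
    intro b
    apply rightLim_eq_of_tendsto (h := nhdsGT_neBot b)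
    have hFb : sInf (F '' Ioi b) = F b := by
      apply le_antisymm
      · -- via sequence b + 1/(n+1)
        set u : ℕ → ℝ := fun n => b + 1 / (n + 1 : ℝ) with hu
        have hbu : ∀ n, b < u n := by
          intro n
          have : (0:ℝ) < 1 / (n + 1 : ℝ) := by positivity
          simp only [hu]; linarith
        have hiInter : ⋂ n, Iic (u n) = Iic b := by
          ext x
          simp only [mem_iInter, mem_Iic]
          constructor
          · intro h
            have hlim : Filter.Tendsto u Filter.atTop (nhds b) := by
              have := tendsto_one_div_add_atTop_nhds_zero_nat (𝕜 := ℝ)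
              have h2 := this.const_add b
              simpa [hu, one_div] using h2
            exact ge_of_tendsto' hlim h
          · intro h n; exact h.trans (hbu n).le
        have htend : Filter.Tendsto (fun n => ν (Iic (u n))) Filter.atTop
            (nhds (ν (Iic b))) := by
          have := tendsto_measure_iInter_atTop (μ := ν)
            (s := fun n => Iic (u n))
            (fun n => measurableSet_Iic.nullMeasurableSet)
            (fun n m hnm => by
              apply Iic_subset_Iic.2
              simp only [hu]
              gcongr)
            ⟨0, measure_ne_top ν _⟩
          rwa [hiInter] at this
        have htendF : Filter.Tendsto (fun n => F (u n)) Filter.atTop (nhds (F b)) :=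
          (ENNReal.tendsto_toReal (measure_ne_top ν _)).comp htend
        apply ge_of_tendsto' htendF
        intro n
        apply csInf_le
        · exact ⟨0, by rintro y ⟨r, _, rfl⟩; exact ENNReal.toReal_nonneg⟩
        · exact ⟨u n, hbu n, rfl⟩
      · refine le_csInf ⟨F (b + 1), mem_image_of_mem F (by simp : (b+1:ℝ) ∈ Ioi b)⟩ ?_
        rintro y ⟨r, hr, rfl⟩
        exact hFmono (le_of_lt hr)
    have hFt : Filter.Tendsto F (nhdsWithin b (Ioi b)) (nhds (F b)) := by
      have := hFmono.tendsto_nhdsGT b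
      rwa [hFb] at this
    apply hFt.congr'
    -- F =ᶠ radialCDF on 𝓝[>] b
    have : ∀ᶠ r in nhdsWithin b (Ioi b), r ≠ 0 := by
      rcases lt_or_ge b 0 with hb | hb
      · exact eventually_nhdsWithin_of_eventually_nhds
          (IsOpen.eventually_mem isOpen_ne hb.ne)
      · filter_upwards [self_mem_nhdsWithin] with r hr
        exact ne_of_gt (lt_of_le_of_lt hb hr)
    filter_upwards [this] with r hr
    exact (hGF r hr).symm
  -- μ = ν
  have hμν : μ = ν := by
    apply Measure.ext_of_Ioc' μ ν
    · intro a b hab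
      rw [hμ a b hab.le]
      exact ENNReal.ofReal_ne_top
    · intro a b hab
      rw [hμ a b hab.le, hR a, hR b]
      have hsub : ν (Ioc a b) = ν (Iic b) - ν (Iic a) := by
        rw [← Iic_sdiff_Iic,
          measure_diff (Iic_subset_Iic.2 hab.le) measurableSet_Iic.nullMeasurableSet
            (measure_ne_top ν _)]
      rw [hsub, ← ENNReal.toReal_sub_of_le (measure_mono (Iic_subset_Iic.2 hab.le))
        (measure_ne_top ν _), ENNReal.ofReal_toReal]
      exact ne_top_of_le_ne_top (measure_ne_top ν _) tsub_le_self
  -- main chain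
  have hSF : SFinite ν := inferInstance
  calc Hplus2 ω ≤ ∫⁻ x, ∫⁻ y, logKernel1 ‖x‖ ‖y‖ ∂ω ∂ω :=
        lintegral_mono fun x => lintegral_mono fun y => kernel_le x y
    _ = ∫⁻ x, ∫⁻ s, logKernel1 ‖x‖ s ∂ν ∂ω := by
        apply lintegral_congr
        intro x
        exact (lintegral_map (f := fun s => logKernel1 ‖x‖ s)
          (mK1.comp measurable_prodMk_left) measurable_norm).symm
    _ = ∫⁻ r, ∫⁻ s, logKernel1 r s ∂ν ∂ν := by
        exact (lintegral_map (f := fun r => ∫⁻ s, logKernel1 r s ∂ν)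
          mK1.lintegral_prod_right' measurable_norm).symm
    _ = HplusM μ := by rw [hμν]; rfl
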